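/- arXiv:math-ph/0411011 — 3 statements merged into one kernel-verified Lean document; each statement's English description precedes it below -/
import Mathlib

section
/- (Moser tame estimate) For each integer s ≥ 1 there is a constant C_s such that for all u, v in the Sobolev space H^s of the circle, ‖uv‖_{H^s} ≤ C_s(‖u‖_{H^s}‖v‖_{H^1} + ‖v‖_{H^s}‖u‖_{H^1}). -/
open scoped ENNReal NNReal

/-- The Sobolev `H^s` norm of a periodic function, expressed through its Fourier
coefficients `u : ℤ → ℂ`: `‖u‖_{H^s}² = ∑_k (1+|k|)^{2s} |û_k|²`, valued in `ℝ≥0∞`. -/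
noncomputable def sobNorm (s : ℝ) (u : ℤ → ℂ) : ℝ≥0∞ :=
  (∑' k : ℤ, (1 + (k.natAbs : ℝ≥0∞)) ^ (2 * s) * (‖u k‖₊ : ℝ≥0∞) ^ 2) ^ (1 / 2 : ℝ)

/-- The Fourier coefficients of the pointwise product, i.e. the convolution. -/
noncomputable def fourierConv (u v : ℤ → ℂ) : ℤ → ℂ := fun k => ∑' l : ℤ, u l * v (k - l)

namespace MoserAux

open MeasureTheory

noncomputable def L2 (f : ℤ → ℝ≥0∞) : ℝ≥0∞ := (∑' k, f k ^ 2) ^ (1 / 2 : ℝ)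

noncomputable def conv (f g : ℤ → ℝ≥0∞) : ℤ → ℝ≥0∞ := fun k => ∑' l, f l * g (k - l)

lemma rpow_two_eq (x : ℝ≥0∞) : x ^ (2 : ℝ) = x ^ 2 := by
  rw [show (2:ℝ) = ((2:ℕ):ℝ) by norm_num, ENNReal.rpow_natCast]

lemma sq_rpow_half (x : ℝ≥0∞) : (x ^ (1/2 : ℝ)) ^ 2 = x := by
  rw [← rpow_two_eq, ← ENNReal.rpow_mul]; norm_num

lemma rpow_half_sq (x : ℝ≥0∞) : (x ^ 2) ^ (1/2 : ℝ) = x := by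
  rw [← rpow_two_eq, ← ENNReal.rpow_mul]; norm_num

/-- Cauchy–Schwarz for `ℝ≥0∞`-valued sums. -/
lemma cs (f g : ℤ → ℝ≥0∞) :
    ∑' k, f k * g k ≤ (∑' k, f k ^ 2) ^ (1/2 : ℝ) * (∑' k, g k ^ 2) ^ (1/2 : ℝ) := by
  have h22 : Real.HolderConjugate 2 2 := Real.HolderConjugate.two_two
  have := ENNReal.lintegral_mul_le_Lp_mul_Lq (Measure.count : Measure ℤ) h22
    (f := f) (g := g) (measurable_of_countable f).aemeasurable
    (measurable_of_countable g).aemeasurable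
  simpa [lintegral_count, rpow_two_eq, Pi.mul_apply] using this

lemma L2_mono {f g : ℤ → ℝ≥0∞} (h : ∀ k, f k ≤ g k) : L2 f ≤ L2 g :=
  ENNReal.rpow_le_rpow (ENNReal.tsum_le_tsum fun k => pow_le_pow_left₀ zero_le (h k) 2)
    (by norm_num)

lemma L2_add_le (f g : ℤ → ℝ≥0∞) : L2 (fun k => f k + g k) ≤ L2 f + L2 g := by
  have := ENNReal.lintegral_Lp_add_le (μ := (Measure.count : Measure ℤ)) (p := 2)
    (f := f) (g := g) (measurable_of_countable f).aemeasurable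
    (measurable_of_countable g).aemeasurable (by norm_num)
  simpa [lintegral_count, rpow_two_eq, L2, Pi.add_apply] using this

lemma L2_const_mul (c : ℝ≥0∞) (f : ℤ → ℝ≥0∞) : L2 (fun k => c * f k) = c * L2 f := by
  simp only [L2, mul_pow, ENNReal.tsum_mul_left,
    ENNReal.mul_rpow_of_nonneg _ _ (by norm_num : (0:ℝ) ≤ 1/2), rpow_half_sq]

/-- Young's inequality `‖f⋆g‖₂ ≤ ‖f‖₂ ‖g‖₁`. -/
lemma L2_conv_le (f g : ℤ → ℝ≥0∞) : L2 (conv f g) ≤ L2 f * ∑' k, g k := by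
  set S : ℝ≥0∞ := ∑' k, g k with hS
  have hgk : ∀ k : ℤ, ∑' l, g (k - l) = S := by
    intro k
    rw [hS, ← Equiv.tsum_eq (Equiv.subLeft k) g]
    rfl
  have key : ∀ k : ℤ, conv f g k ^ 2 ≤ (∑' l, f l ^ 2 * g (k - l)) * S := by
    intro k
    have h1 : conv f g k ≤ (∑' l, f l ^ 2 * g (k - l)) ^ (1/2:ℝ) * S ^ (1/2:ℝ) := by
      have : conv f g k = ∑' l, (f l * g (k - l) ^ (1/2:ℝ)) * (g (k - l) ^ (1/2:ℝ)) := by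
        unfold conv
        congr 1; funext l
        rw [mul_assoc, ← sq, sq_rpow_half]
      rw [this]
      refine (cs _ _).trans ?_
      have e1 : ∀ l : ℤ, (f l * g (k - l) ^ (1/2:ℝ)) ^ 2 = f l ^ 2 * g (k - l) := by
        intro l; rw [mul_pow, sq_rpow_half]
      have e2 : ∀ l : ℤ, (g (k - l) ^ (1/2:ℝ)) ^ 2 = g (k - l) := fun l => sq_rpow_half _
      simp only [e1, e2, hgk k]
      exact le_rfl
    calc conv f g k ^ 2 ≤ ((∑' l, f l ^ 2 * g (k - l)) ^ (1/2:ℝ) * S ^ (1/2:ℝ)) ^ 2 :=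
          pow_le_pow_left₀ zero_le h1 2
      _ = (∑' l, f l ^ 2 * g (k - l)) * S := by rw [mul_pow, sq_rpow_half, sq_rpow_half]
  have sum_key : ∑' k, conv f g k ^ 2 ≤ (∑' l, f l ^ 2) * S * S := by
    calc ∑' k, conv f g k ^ 2 ≤ ∑' k, (∑' l, f l ^ 2 * g (k - l)) * S :=
          ENNReal.tsum_le_tsum key
      _ = (∑' k, ∑' l, f l ^ 2 * g (k - l)) * S := by rw [ENNReal.tsum_mul_right]
      _ = (∑' l, ∑' k, f l ^ 2 * g (k - l)) * S := by rw [ENNReal.tsum_comm]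
      _ = (∑' l, f l ^ 2 * ∑' k, g (k - l)) * S := by
          congr 1; exact tsum_congr fun l => by rw [ENNReal.tsum_mul_left]
      _ = (∑' l, f l ^ 2) * S * S := by
          congr 1
          rw [← ENNReal.tsum_mul_right]
          refine tsum_congr fun l => ?_
          congr 1
          rw [hS, ← Equiv.tsum_eq (Equiv.subRight l) g]
          rfl
  calc L2 (conv f g) ≤ ((∑' l, f l ^ 2) * S * S) ^ (1/2:ℝ) :=
        ENNReal.rpow_le_rpow sum_key (by norm_num)
    _ = L2 f * S := by
        rw [mul_assoc, ← sq, ENNReal.mul_rpow_of_nonneg _ _ (by norm_num : (0:ℝ) ≤ 1/2),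
          rpow_half_sq]
        rfl

lemma conv_comm (f g : ℤ → ℝ≥0∞) : conv f g = conv g f := by
  funext k
  unfold conv
  have h := Equiv.tsum_eq (Equiv.subLeft k) (fun m => g m * f (k - m))
  simp only [Equiv.subLeft_apply, sub_sub_cancel] at h
  rw [← h]
  exact tsum_congr fun l => mul_comm _ _

lemma enn_tsum_le (f : ℤ → ℂ) : (‖∑' k, f k‖₊ : ℝ≥0∞) ≤ ∑' k, (‖f k‖₊ : ℝ≥0∞) := by
  by_cases h : ∑' k, (‖f k‖₊ : ℝ≥0∞) = ⊤
  · exact h ▸ le_top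
  · have hsum : Summable fun k => ‖f k‖₊ := ENNReal.tsum_coe_ne_top_iff_summable.mp h
    rw [← ENNReal.coe_tsum hsum]
    exact ENNReal.coe_le_coe.mpr (nnnorm_tsum_le hsum)

/-- weight function -/
noncomputable def w (s : ℕ) (k : ℤ) : ℝ≥0∞ := (1 + (k.natAbs : ℝ≥0∞)) ^ s

lemma w_split (s : ℕ) (k l : ℤ) : w s k ≤ 2 ^ s * (w s l + w s (k - l)) := by
  have habs : (k.natAbs : ℝ≥0∞) ≤ (l.natAbs : ℝ≥0∞) + ((k - l).natAbs : ℝ≥0∞) := by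
    have : k.natAbs ≤ l.natAbs + (k - l).natAbs := by
      have := Int.natAbs_add_le l (k - l)
      simpa using this
    exact_mod_cast this
  set a : ℝ≥0∞ := 1 + (l.natAbs : ℝ≥0∞)
  set b : ℝ≥0∞ := 1 + ((k - l).natAbs : ℝ≥0∞)
  have h1 : (1 + (k.natAbs : ℝ≥0∞)) ≤ a + b := by
    calc (1 + (k.natAbs : ℝ≥0∞)) ≤ 1 + ((l.natAbs : ℝ≥0∞) + ((k - l).natAbs : ℝ≥0∞)) :=
          add_le_add_right habs 1
      _ ≤ a + b := by
          have hab : a + b = 2 + ((l.natAbs : ℝ≥0∞) + ((k - l).natAbs : ℝ≥0∞)) := by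
            simp only [a, b]; ring
          rw [hab]
          exact add_le_add_left one_le_two _
  have h2 : a + b ≤ 2 * max a b := by
    rw [two_mul]
    exact add_le_add (le_max_left a b) (le_max_right a b)
  calc w s k ≤ (2 * max a b) ^ s := pow_le_pow_left₀ zero_le (h1.trans h2) s
    _ = 2 ^ s * max a b ^ s := mul_pow 2 _ s
    _ ≤ 2 ^ s * (a ^ s + b ^ s) := by
        gcongr
        rcases le_total a b with h | h
        · rw [max_eq_right h]; exact le_add_self
        · rw [max_eq_left h]; exact le_add_right le_rfl

lemma w_ne_zero (s : ℕ) (k : ℤ) : w s k ≠ 0 := by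
  unfold w
  exact pow_ne_zero _ (by simp)

lemma w_ne_top (s : ℕ) (k : ℤ) : w s k ≠ ⊤ := by
  unfold w
  exact ENNReal.pow_ne_top (by simp [ENNReal.add_ne_top])

/-- sobNorm as an L2 norm of a weighted sequence -/
lemma sobNorm_eq (s : ℕ) (u : ℤ → ℂ) :
    sobNorm s u = L2 (fun k => w s k * (‖u k‖₊ : ℝ≥0∞)) := by
  unfold sobNorm L2 w
  congr 1
  refine tsum_congr fun k => ?_
  rw [mul_pow, ← pow_mul, ← ENNReal.rpow_natCast (1 + (k.natAbs : ℝ≥0∞)) (s * 2)]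
  congr 2
  push_cast
  ring

/-- Finiteness of `∑ (1+|k|)^{-2}` over `ℤ`. -/
lemma A_ne_top : (∑' k : ℤ, ((1 + (k.natAbs : ℝ≥0∞))⁻¹) ^ 2) ≠ ⊤ := by
  have hcoe : ∀ k : ℤ, ((1 + (k.natAbs : ℝ≥0∞))⁻¹) ^ 2
      = ((((1 + (k.natAbs : ℝ≥0))⁻¹ ^ 2 : ℝ≥0)) : ℝ≥0∞) := by
    intro k
    have h1 : (1 + (k.natAbs : ℝ≥0∞)) = (((1 + (k.natAbs : ℝ≥0)) : ℝ≥0) : ℝ≥0∞) := by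
      push_cast; ring
    rw [h1, ← ENNReal.coe_inv (by positivity), ← ENNReal.coe_pow]
  simp only [hcoe]
  refine ENNReal.tsum_coe_ne_top_iff_summable.mpr ?_
  rw [← NNReal.summable_coe]
  have hnat : Summable fun n : ℕ => ((1 + (n : ℝ))⁻¹) ^ 2 := by
    have h := (Real.summable_one_div_nat_pow (p := 2)).mpr one_lt_two
    have h2 := (summable_nat_add_iff 1).mpr h
    refine h2.congr fun n => ?_
    push_cast
    rw [one_div, inv_pow]
    ring_nf
  have hint : Summable fun k : ℤ => ((1 + (k.natAbs : ℝ))⁻¹) ^ 2 := by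
    rw [summable_int_iff_summable_nat_and_neg]
    constructor
    · simpa using hnat
    · simpa using hnat
  refine hint.congr fun k => ?_
  push_cast
  ring

/-- `ℓ¹` norm bounded by `H¹` norm. -/
lemma l1_le (f : ℤ → ℝ≥0∞) :
    ∑' k, f k ≤ (∑' k : ℤ, ((1 + (k.natAbs : ℝ≥0∞))⁻¹) ^ 2) ^ (1/2 : ℝ)
      * L2 (fun k => w 1 k * f k) := by
  have h1 : ∀ k : ℤ, f k = (w 1 k)⁻¹ * (w 1 k * f k) := by
    intro k
    rw [← mul_assoc, ENNReal.inv_mul_cancel (w_ne_zero 1 k) (w_ne_top 1 k), one_mul]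
  calc ∑' k, f k = ∑' k, (w 1 k)⁻¹ * (w 1 k * f k) := tsum_congr h1
    _ ≤ (∑' k, ((w 1 k)⁻¹) ^ 2) ^ (1/2:ℝ) * (∑' k, (w 1 k * f k) ^ 2) ^ (1/2:ℝ) := cs _ _
    _ = (∑' k : ℤ, ((1 + (k.natAbs : ℝ≥0∞))⁻¹) ^ 2) ^ (1/2 : ℝ) * L2 (fun k => w 1 k * f k) := by
        simp [w, L2]

end MoserAux

open MoserAux

/-- Moser's tame estimate: `‖uv‖_{H^s} ≤ C_s (‖u‖_{H^s} ‖v‖_{H^1} + ‖v‖_{H^s} ‖u‖_{H^1})`. -/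
theorem stmt6 (s : ℕ) (hs : 1 ≤ s) :
    ∃ C : ℝ≥0, ∀ u v : ℤ → ℂ, sobNorm s u < ⊤ → sobNorm s v < ⊤ →
      sobNorm s (fourierConv u v) ≤
        (C : ℝ≥0∞) * (sobNorm s u * sobNorm 1 v + sobNorm s v * sobNorm 1 u) := by
  set A : ℝ≥0∞ := (∑' k : ℤ, ((1 + (k.natAbs : ℝ≥0∞))⁻¹) ^ 2) ^ (1/2:ℝ) with hA
  have hAtop : A ≠ ⊤ := by
    rw [hA]
    exact ENNReal.rpow_ne_top_of_nonneg (by norm_num) A_ne_top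
  refine ⟨2 ^ s * A.toNNReal, fun u v _ _ => ?_⟩
  have hC : ((2 ^ s * A.toNNReal : ℝ≥0) : ℝ≥0∞) = 2 ^ s * A := by
    push_cast
    rw [ENNReal.coe_toNNReal hAtop]
  set a : ℤ → ℝ≥0∞ := fun k => (‖u k‖₊ : ℝ≥0∞) with ha
  set b : ℤ → ℝ≥0∞ := fun k => (‖v k‖₊ : ℝ≥0∞) with hb
  set F : ℤ → ℝ≥0∞ := fun l => w s l * a l with hF
  set G : ℤ → ℝ≥0∞ := fun l => w s l * b l with hG
  have hpt : ∀ k, w s k * (‖fourierConv u v k‖₊ : ℝ≥0∞)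
      ≤ 2 ^ s * (conv F b k + conv a G k) := by
    intro k
    have h1 : (‖fourierConv u v k‖₊ : ℝ≥0∞) ≤ conv a b k := by
      refine (enn_tsum_le _).trans ?_
      unfold conv
      refine ENNReal.tsum_le_tsum fun l => ?_
      simp [ha, hb, nnnorm_mul]
    calc w s k * (‖fourierConv u v k‖₊ : ℝ≥0∞) ≤ w s k * conv a b k := mul_le_mul_right h1 _
      _ = ∑' l, w s k * (a l * b (k - l)) := by unfold conv; rw [ENNReal.tsum_mul_left]
      _ ≤ ∑' l, (2 ^ s * (w s l + w s (k - l))) * (a l * b (k - l)) :=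
          ENNReal.tsum_le_tsum fun l => mul_le_mul_left (w_split s k l) _
      _ = ∑' l, 2 ^ s * ((w s l * a l) * b (k - l) + a l * (w s (k - l) * b (k - l))) :=
          tsum_congr fun l => by ring
      _ = 2 ^ s * (conv F b k + conv a G k) := by
          rw [ENNReal.tsum_mul_left, ENNReal.tsum_add]
          rfl
  have e1 : sobNorm 1 u = L2 (fun k => w 1 k * a k) := by
    have := sobNorm_eq 1 u
    simpa using this
  have e1v : sobNorm 1 v = L2 (fun k => w 1 k * b k) := by
    have := sobNorm_eq 1 v
    simpa using this
  calc sobNorm s (fourierConv u v)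
      = L2 (fun k => w s k * (‖fourierConv u v k‖₊ : ℝ≥0∞)) := sobNorm_eq s _
    _ ≤ L2 (fun k => 2 ^ s * (conv F b k + conv a G k)) := L2_mono hpt
    _ = 2 ^ s * L2 (fun k => conv F b k + conv a G k) := L2_const_mul _ _
    _ ≤ 2 ^ s * (L2 (conv F b) + L2 (conv a G)) :=
        mul_le_mul_right (L2_add_le (conv F b) (conv a G)) _
    _ ≤ 2 ^ s * ((L2 F * ∑' k, b k) + (L2 G * ∑' k, a k)) := by
        gcongr
        · exact L2_conv_le F b
        · rw [conv_comm]
          exact L2_conv_le G a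
    _ ≤ 2 ^ s * ((L2 F * (A * L2 (fun k => w 1 k * b k)))
          + (L2 G * (A * L2 (fun k => w 1 k * a k)))) := by
        gcongr
        · exact l1_le b
        · exact l1_le a
    _ = (2 ^ s * A) * (L2 F * L2 (fun k => w 1 k * b k)
          + L2 G * L2 (fun k => w 1 k * a k)) := by ring
    _ = ((2 ^ s * A.toNNReal : ℝ≥0) : ℝ≥0∞)
          * (sobNorm s u * sobNorm 1 v + sobNorm s v * sobNorm 1 u) := by
        rw [hC, sobNorm_eq s u, sobNorm_eq s v, e1, e1v]
end

section
/- Let g : J → ℝ be m times differentiable on an interval J ⊂ ℝ with |g^{(m)}(τ)| ≥ d > 0 for all τ ∈ J. Then for any h > 0, the Lebesgue measure of the sublevel set J_h = {τ ∈ J : |g(τ)| < h} satisfies |J_h| ≤ M·h^{1/m}, where M = 2(2+3+···+m+d^{−1}). -/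
open MeasureTheory

section Aux

/-- AM-GM style inequality: `m*u ≤ u^m + m - 1` for `u ≥ 0`. -/
lemma stmt7_amgm (m : ℕ) (u : ℝ) (hu : 0 ≤ u) : (m : ℝ) * u ≤ u ^ m + m - 1 := by
  induction m with
  | zero => simp
  | succ n ih =>
    have key : 0 ≤ (u - 1) * (u ^ n - 1) := by
      rcases le_total u 1 with h | h
      · have h1 : u ^ n ≤ 1 := pow_le_one₀ hu h
        nlinarith
      · have h1 : 1 ≤ u ^ n := one_le_pow₀ h
        nlinarith
    have hps : u ^ (n+1) = u ^ n * u := pow_succ u n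
    push_cast
    nlinarith [key, ih, hps]

lemma stmt7_sum_Icc (m : ℕ) (hm : 1 ≤ m) :
    (∑ i ∈ Finset.Icc 2 m, (i : ℝ)) * 2 = (m : ℝ) ^ 2 + (m : ℝ) - 2 := by
  induction m with
  | zero => omega
  | succ n ih =>
    rcases Nat.lt_or_ge n 1 with hn | hn
    · interval_cases n
      · norm_num
    · have h2 : 2 ≤ n + 1 := by omega
      rw [Finset.sum_Icc_succ_top h2]
      have ihn := ih hn
      push_cast at ihn ⊢
      linarith

/-- Iterated Rolle: given a chain of functions `G k` where `G (k+1)` is the derivative of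
`G k` on `Ioo a b`, and `n+1` increasing zeros of `G 0` in `Icc a b`, the function `G n`
has a zero in `Icc a b` (in `Ioo a b` if `n > 0`). -/
lemma stmt7_multiRolle : ∀ (n : ℕ) (G : ℕ → ℝ → ℝ) (a b : ℝ),
    (0 < n → ContinuousOn (G 0) (Set.Icc a b)) →
    (∀ k < n, ∀ x ∈ Set.Ioo a b, HasDerivAt (G k) (G (k+1) x) x) →
    ∀ z : ℕ → ℝ, (∀ i < n, z i < z (i+1)) → (∀ i ≤ n, z i ∈ Set.Icc a b) →
    (∀ i ≤ n, G 0 (z i) = 0) →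
    ∃ ξ ∈ Set.Icc a b, (0 < n → ξ ∈ Set.Ioo a b) ∧ G n ξ = 0 := by
  intro n
  induction n with
  | zero =>
    intro G a b _ _ z _ hmem hzero
    exact ⟨z 0, hmem 0 le_rfl, fun hn => absurd hn (by omega), hzero 0 le_rfl⟩
  | succ n ih =>
    intro G a b hcont hderiv z hz hmem hzero
    -- strict monotonicity of z
    have zlt : ∀ i j, i < j → j ≤ n + 1 → z i < z j := by
      intro i j hij hj
      induction j with
      | zero => omega
      | succ k ihk =>
        rcases Nat.lt_succ_iff_lt_or_eq.mp hij with hc | hc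
        · exact lt_trans (ihk hc (by omega)) (hz k (by omega))
        · subst hc; exact hz i (by omega)
    -- Rolle on consecutive pairs
    have step : ∀ i ≤ n, ∃ w ∈ Set.Ioo (z i) (z (i+1)), G 1 w = 0 := by
      intro i hi
      have hab : z i < z (i+1) := hz i (by omega)
      have hc : ContinuousOn (G 0) (Set.Icc (z i) (z (i+1))) :=
        (hcont (by omega)).mono (Set.Icc_subset_Icc (hmem i (by omega)).1 (hmem (i+1) (by omega)).2)
      obtain ⟨c, hc1, hc2⟩ := exists_deriv_eq_zero hab hc
        (by rw [hzero i (by omega), hzero (i+1) (by omega)])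
      refine ⟨c, hc1, ?_⟩
      have hcio : c ∈ Set.Ioo a b :=
        ⟨lt_of_le_of_lt (hmem i (by omega)).1 hc1.1, lt_of_lt_of_le hc1.2 (hmem (i+1) (by omega)).2⟩
      have hd := (hderiv 0 (by omega) c hcio).deriv
      rw [← hd]
      exact hc2
    choose! w hw1 hw2 using step
    have hwio : ∀ i ≤ n, w i ∈ Set.Ioo a b := fun i hi =>
      ⟨lt_of_le_of_lt (hmem i (by omega)).1 (hw1 i hi).1,
        lt_of_lt_of_le (hw1 i hi).2 (hmem (i+1) (by omega)).2⟩
    obtain ⟨a', ha'1, ha'2⟩ := exists_between (hwio 0 (Nat.zero_le n)).1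
    obtain ⟨b', hb'1, hb'2⟩ := exists_between (hwio n le_rfl).2
    have hsub : Set.Icc a' b' ⊆ Set.Ioo a b := fun x hx =>
      ⟨lt_of_lt_of_le ha'1 hx.1, lt_of_le_of_lt hx.2 hb'2⟩
    have hwmem : ∀ i ≤ n, w i ∈ Set.Icc a' b' := by
      intro i hi
      constructor
      · rcases Nat.eq_zero_or_pos i with h0 | h0
        · subst h0; exact le_of_lt ha'2
        · have c1 : w 0 < z 1 := (hw1 0 (by omega)).2
          have c2 : z 1 ≤ z i := by
            rcases Nat.lt_or_ge 1 i with hc | hc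
            · exact le_of_lt (zlt 1 i hc (by omega))
            · have : i = 1 := by omega
              subst this; rfl
          have c3 : z i < w i := (hw1 i hi).1
          linarith
      · rcases Nat.lt_or_ge i n with h0 | h0
        · have c1 : w i < z (i+1) := (hw1 i hi).2
          have c2 : z (i+1) ≤ z n := by
            rcases Nat.lt_or_ge (i+1) n with hc | hc
            · exact le_of_lt (zlt (i+1) n hc (by omega))
            · have : i + 1 = n := by omega
              subst this; rfl
          have c3 : z n < w n := (hw1 n le_rfl).1
          linarith
        · have : i = n := by omega
          subst this; exact le_of_lt hb'1
    obtain ⟨ξ, hξ1, hξ2, hξ3⟩ := ih (fun k => G (k+1)) a' b'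
      (fun hn => fun x hx => ((hderiv 1 (by omega) x (hsub hx)).continuousAt).continuousWithinAt)
      (fun k hk x hx => hderiv (k+1) (by omega) x (hsub (Set.Ioo_subset_Icc_self hx)))
      w
      (fun i hi => lt_trans (hw1 i (by omega)).2 (hw1 (i+1) (by omega)).1)
      hwmem hw2
    exact ⟨ξ, Set.Ioo_subset_Icc_self (hsub hξ1), fun _ => hsub hξ1, hξ3⟩

/-- product of gaps lower bound -/
lemma stmt7_prod_gap (y : ℕ → ℝ) (r : ℝ) (hr : 0 < r) (m i : ℕ) (hi : i ≤ m)
    (hsep : ∀ a b : ℕ, a < b → b ≤ m → ((b : ℝ) - a) * r ≤ y b - y a) :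
    (i.factorial : ℝ) * ((m - i).factorial : ℝ) * r ^ m ≤
      ∏ j ∈ (Finset.range (m+1)).erase i, |y i - y j| := by
  have herase : (Finset.range (m+1)).erase i = Finset.range i ∪ Finset.Ico (i+1) (m+1) := by
    ext j
    simp only [Finset.mem_erase, Finset.mem_range, Finset.mem_union, Finset.mem_Ico]
    omega
  have hdisj : Disjoint (Finset.range i) (Finset.Ico (i+1) (m+1)) := by
    rw [Finset.disjoint_left]
    intro j hj1 hj2
    simp only [Finset.mem_range] at hj1
    simp only [Finset.mem_Ico] at hj2
    omega
  rw [herase, Finset.prod_union hdisj]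
  have h1 : ∏ j ∈ Finset.range i, (((i : ℝ) - j) * r) ≤ ∏ j ∈ Finset.range i, |y i - y j| := by
    apply Finset.prod_le_prod
    · intro j hj
      have hj' := Finset.mem_range.mp hj
      have : (j : ℝ) ≤ i := by exact_mod_cast le_of_lt hj'
      nlinarith
    · intro j hj
      have hj' := Finset.mem_range.mp hj
      calc ((i : ℝ) - j) * r ≤ y i - y j := hsep j i hj' hi
        _ ≤ |y i - y j| := le_abs_self _
  have h2 : ∏ j ∈ Finset.Ico (i+1) (m+1), (((j : ℝ) - i) * r) ≤
      ∏ j ∈ Finset.Ico (i+1) (m+1), |y i - y j| := by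
    apply Finset.prod_le_prod
    · intro j hj
      have hj' := (Finset.mem_Ico.mp hj).1
      have : (i : ℝ) ≤ j := by exact_mod_cast (by omega : i ≤ j)
      nlinarith
    · intro j hj
      have hj' := Finset.mem_Ico.mp hj
      calc ((j : ℝ) - i) * r ≤ y j - y i := hsep i j (by omega) (by omega)
        _ ≤ |y j - y i| := le_abs_self _
        _ = |y i - y j| := abs_sub_comm _ _
  have e1 : ∏ j ∈ Finset.range i, (((i : ℝ) - j) * r) = (i.factorial : ℝ) * r ^ i := by
    rw [Finset.prod_mul_distrib, Finset.prod_const, Finset.card_range]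
    congr 1
    have hc : ∀ j ∈ Finset.range i, ((i : ℝ) - j) = ((i - j : ℕ) : ℝ) := by
      intro j hj
      have := Finset.mem_range.mp hj
      rw [Nat.cast_sub (le_of_lt this)]
    rw [Finset.prod_congr rfl hc, ← Nat.cast_prod]
    congr 1
    rw [← Finset.prod_range_reflect, ← Finset.prod_range_add_one_eq_factorial i]
    apply Finset.prod_congr rfl
    intro j hj
    have := Finset.mem_range.mp hj
    omega
  have e2 : ∏ j ∈ Finset.Ico (i+1) (m+1), (((j : ℝ) - i) * r) =
      ((m - i).factorial : ℝ) * r ^ (m - i) := by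
    rw [Finset.prod_Ico_eq_prod_range]
    have hc : m + 1 - (i + 1) = m - i := by omega
    rw [hc, Finset.prod_mul_distrib, Finset.prod_const, Finset.card_range]
    congr 1
    have hc2 : ∀ k ∈ Finset.range (m - i), (((i + 1 + k : ℕ) : ℝ) - i) = ((k + 1 : ℕ) : ℝ) := by
      intro k hk
      push_cast
      ring
    rw [Finset.prod_congr rfl hc2, ← Nat.cast_prod]
    congr 1
    exact Finset.prod_range_add_one_eq_factorial (m - i)
  have hpos1 : (0 : ℝ) ≤ ∏ j ∈ Finset.range i, (((i : ℝ) - j) * r) := by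
    rw [e1]; positivity
  have hpos2 : (0 : ℝ) ≤ ∏ j ∈ Finset.Ico (i+1) (m+1), |y i - y j| :=
    Finset.prod_nonneg fun j _ => abs_nonneg _
  calc (i.factorial : ℝ) * ((m - i).factorial : ℝ) * r ^ m
      = ((i.factorial : ℝ) * r ^ i) * (((m - i).factorial : ℝ) * r ^ (m - i)) := by
        rw [show r ^ m = r ^ i * r ^ (m - i) by rw [← pow_add]; congr 1; omega]
        ring
    _ = (∏ j ∈ Finset.range i, (((i : ℝ) - j) * r)) *
        (∏ j ∈ Finset.Ico (i+1) (m+1), (((j : ℝ) - i) * r)) := by rw [e1, e2]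
    _ ≤ (∏ j ∈ Finset.range i, |y i - y j|) *
        (∏ j ∈ Finset.Ico (i+1) (m+1), |y i - y j|) := by
        apply mul_le_mul h1 h2 _ (Finset.prod_nonneg fun j _ => abs_nonneg _)
        rw [e2]; positivity

end Aux

section PointSelection

/-- From a set of large measure one can select `m+1` points with gaps at least `r`. -/
lemma stmt7_select (E : Set ℝ) (m : ℕ) (r : ℝ) (hr : 0 < r)
    (hvol : ENNReal.ofReal (m * r) < volume E) :
    ∃ y : ℕ → ℝ, (∀ i ≤ m, y i ∈ E) ∧ (∀ i < m, y i + r ≤ y (i+1)) := by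
  -- reduce to a bounded piece
  obtain ⟨n, hn⟩ : ∃ n : ℕ, ENNReal.ofReal (m * r) < volume (E ∩ Set.Icc (-(n : ℝ)) n) := by
    have hmono : Monotone (fun n : ℕ => E ∩ Set.Icc (-(n : ℝ)) n) := by
      intro a b hab
      apply Set.inter_subset_inter_right
      apply Set.Icc_subset_Icc <;> · simp; exact_mod_cast hab
    have hunion : (⋃ n : ℕ, (E ∩ Set.Icc (-(n : ℝ)) n)) = E := by
      rw [← Set.inter_iUnion]
      rw [Set.inter_eq_self_of_subset_left]
      intro x _
      obtain ⟨n, hn⟩ := exists_nat_ge |x|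
      exact Set.mem_iUnion.mpr ⟨n, ⟨by cases abs_le.mp hn; linarith, (abs_le.mp hn).2⟩⟩
    have hsup := hmono.measure_iUnion (μ := volume)
    rw [hunion] at hsup
    rw [hsup] at hvol
    exact lt_iSup_iff.mp hvol
  set F := E ∩ Set.Icc (-(n : ℝ)) n with hF
  have hFE : F ⊆ E := Set.inter_subset_left
  have hfin : volume F ≠ ⊤ := by
    apply ne_top_of_le_ne_top _ (measure_mono Set.inter_subset_right)
    simp [Real.volume_Icc]
  set L : ℝ := (volume F).toReal with hLdef
  have hmr : (m : ℝ) * r < L := by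
    rw [hLdef]
    exact (ENNReal.ofReal_lt_iff_lt_toReal (by positivity) hfin).mp hn
  set δ : ℝ := (L - m * r) / (m + 1) with hδdef
  have hδ : 0 < δ := by
    apply div_pos (by linarith) (by positivity)
  set c : ℕ → ℝ := fun i => δ / 2 + i * (r + δ) with hcdef
  have hcL : ∀ i ≤ m, 0 < c i ∧ c i < L := by
    intro i hi
    have him : (i : ℝ) ≤ m := by exact_mod_cast hi
    constructor
    · have : (0:ℝ) ≤ (i : ℝ) * (r + δ) := by positivity
      simp only [hcdef]; linarith
    · simp only [hcdef]
      have h1 : (i : ℝ) * (r + δ) ≤ (m : ℝ) * (r + δ) := by nlinarith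
      have h2 : L = (m : ℝ) * r + (m + 1) * δ := by
        rw [hδdef]; field_simp; ring
      nlinarith
  set φ : ℝ → ℝ := fun t => (volume (F ∩ Set.Iic t)).toReal with hφdef
  have hfin' : ∀ t, volume (F ∩ Set.Iic t) ≠ ⊤ := fun t =>
    ne_top_of_le_ne_top hfin (measure_mono Set.inter_subset_left)
  have hφmono : Monotone φ := by
    intro s t hst
    apply ENNReal.toReal_le_toReal (hfin' s) (hfin' t) |>.mpr
    exact measure_mono (Set.inter_subset_inter_right _ (Set.Iic_subset_Iic.mpr hst))
  have hφlip : ∀ s t, s ≤ t → φ t ≤ φ s + (t - s) := by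
    intro s t hst
    have hsub : F ∩ Set.Iic t ⊆ (F ∩ Set.Iic s) ∪ Set.Ioc s t := by
      intro x hx
      rcases le_or_gt x s with hc | hc
      · exact Or.inl ⟨hx.1, hc⟩
      · exact Or.inr ⟨hc, hx.2⟩
    have h1 : volume (F ∩ Set.Iic t) ≤ volume (F ∩ Set.Iic s) + ENNReal.ofReal (t - s) := by
      calc volume (F ∩ Set.Iic t) ≤ volume ((F ∩ Set.Iic s) ∪ Set.Ioc s t) := measure_mono hsub
        _ ≤ volume (F ∩ Set.Iic s) + volume (Set.Ioc s t) := measure_union_le _ _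
        _ = volume (F ∩ Set.Iic s) + ENNReal.ofReal (t - s) := by rw [Real.volume_Ioc]
    have h2 := ENNReal.toReal_le_toReal (hfin' t)
      (by exact ENNReal.add_ne_top.mpr ⟨hfin' s, ENNReal.ofReal_ne_top⟩) |>.mpr h1
    rw [ENNReal.toReal_add (hfin' s) ENNReal.ofReal_ne_top,
      ENNReal.toReal_ofReal (by linarith)] at h2
    exact h2
  have hφzero : ∀ t, t < -(n : ℝ) → φ t = 0 := by
    intro t ht
    have : F ∩ Set.Iic t = ∅ := by
      ext x
      simp only [Set.mem_inter_iff, Set.mem_empty_iff_false, iff_false, not_and, hF]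
      intro hx h2
      exact absurd (hx.2.1.trans h2) (by linarith)
    simp [hφdef, this]
  have hφtop : φ n = L := by
    have : F ∩ Set.Iic (n : ℝ) = F := by
      apply Set.inter_eq_self_of_subset_left
      intro x hx
      exact hx.2.2
    rw [hφdef]; simp only [this, hLdef]
  -- the selection points
  set S : ℕ → Set ℝ := fun i => {t | c i ≤ φ t} with hSdef
  have hSne : ∀ i ≤ m, ((n : ℝ)) ∈ S i := by
    intro i hi
    show c i ≤ φ n
    rw [hφtop]
    exact le_of_lt (hcL i hi).2
  have hSbd : ∀ i ≤ m, BddBelow (S i) := by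
    intro i hi
    refine ⟨-(n : ℝ) - 1, fun t ht => ?_⟩
    by_contra hc
    push_neg at hc
    have : φ t = 0 := hφzero t (by linarith)
    have : c i ≤ 0 := by rw [← this]; exact ht
    linarith [(hcL i hi).1]
  set x : ℕ → ℝ := fun i => sInf (S i) with hxdef
  have hx2 : ∀ i ≤ m, ∀ ρ, 0 < ρ → c i ≤ φ (x i + ρ) := by
    intro i hi ρ hρ
    have : sInf (S i) < x i + ρ := by rw [hxdef]; simp only []; linarith
    obtain ⟨t, htS, htlt⟩ := (csInf_lt_iff (hSbd i hi) ⟨_, hSne i hi⟩).mp this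
    exact le_trans htS (hφmono (le_of_lt htlt))
  have hx1 : ∀ i ≤ m, ∀ t, t < x i → φ t < c i := by
    intro i hi t ht
    by_contra hc
    push_neg at hc
    have : x i ≤ t := csInf_le (hSbd i hi) hc
    linarith
  have hgapx : ∀ i < m, x i + (r + δ) ≤ x (i+1) := by
    intro i hi
    by_contra hc
    push_neg at hc
    obtain ⟨θ, hθ1, hθ2⟩ := exists_between (sub_pos.mpr hc)
    have hθpos : 0 < θ / 2 := by linarith
    have h1 : c (i+1) ≤ φ (x (i+1) + θ/2) := hx2 (i+1) (by omega) _ hθpos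
    have h2 : φ (x i - θ/2) < c i := hx1 i (by omega) _ (by linarith)
    have hci : c (i+1) = c i + (r + δ) := by
      simp only [hcdef]; push_cast; ring
    rcases le_or_gt (x (i+1) + θ/2) (x i - θ/2) with hord | hord
    · have h9 := hφmono hord
      clear_value S x c φ L F
      linarith
    · have h3 := hφlip (x i - θ/2) (x (i+1) + θ/2) (le_of_lt hord)
      have h4 : x (i+1) - x i + θ < r + δ := by linarith
      clear_value S x c φ L F
      linarith
  have hpick : ∀ i, i ≤ m → ∃ p, p ∈ F ∧ p ∈ Set.Ioc (x i - δ/4) (x i + δ/4) := by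
    intro i hi
    have h1 : φ (x i - δ/4) < c i := hx1 i hi _ (by linarith)
    have h2 : c i ≤ φ (x i + δ/4) := hx2 i hi _ (by linarith)
    have hne : volume (F ∩ Set.Ioc (x i - δ/4) (x i + δ/4)) ≠ 0 := by
      intro h0
      have hsub : F ∩ Set.Iic (x i + δ/4) ⊆
          (F ∩ Set.Iic (x i - δ/4)) ∪ (F ∩ Set.Ioc (x i - δ/4) (x i + δ/4)) := by
        intro p hp
        rcases le_or_gt p (x i - δ/4) with hc | hc
        · exact Or.inl ⟨hp.1, hc⟩
        · exact Or.inr ⟨hp.1, hc, hp.2⟩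
      have hle : volume (F ∩ Set.Iic (x i + δ/4)) ≤ volume (F ∩ Set.Iic (x i - δ/4)) := by
        calc volume (F ∩ Set.Iic (x i + δ/4))
            ≤ volume ((F ∩ Set.Iic (x i - δ/4)) ∪ (F ∩ Set.Ioc (x i - δ/4) (x i + δ/4))) :=
              measure_mono hsub
          _ ≤ volume (F ∩ Set.Iic (x i - δ/4)) + volume (F ∩ Set.Ioc (x i - δ/4) (x i + δ/4)) :=
              measure_union_le _ _
          _ = volume (F ∩ Set.Iic (x i - δ/4)) := by rw [h0, add_zero]
      have := ENNReal.toReal_le_toReal (hfin' _) (hfin' _) |>.mpr hle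
      have hmono' : φ (x i + δ/4) ≤ φ (x i - δ/4) := this
      linarith
    obtain ⟨p, hp⟩ := nonempty_of_measure_ne_zero hne
    exact ⟨p, hp.1, hp.2⟩
  choose! y hy1 hy2 using hpick
  refine ⟨y, fun i hi => hFE (hy1 i hi), ?_⟩
  intro i hi
  have g1 := hy2 i (by omega)
  have g2 := hy2 (i+1) (by omega)
  have g3 := hgapx i hi
  have : y i ≤ x i + δ/4 := g1.2
  have : x (i+1) - δ/4 < y (i+1) := g2.1
  linarith [g1.2, g2.1]

end PointSelection

section Analytic

/-- The divided-difference / interpolation estimate: if `|g| ≤ h` at `m+1` points of `J`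
separated by gaps `≥ r`, then `d * r^m ≤ 2^m * h`. -/
lemma stmt7_lemA (J : Set ℝ) (hJ : J.OrdConnected) (g : ℝ → ℝ) (m : ℕ) (hm : 1 ≤ m)
    (d : ℝ)
    (hdiff : ∀ i < m, DifferentiableOn ℝ (iteratedDerivWithin i g J) J)
    (hlow : ∀ τ ∈ J, d ≤ |iteratedDerivWithin m g J τ|)
    (h r : ℝ) (hr : 0 < r) (y : ℕ → ℝ)
    (hyJ : ∀ i ≤ m, y i ∈ J) (hgap : ∀ i < m, y i + r ≤ y (i+1))
    (hgy : ∀ i ≤ m, |g (y i)| ≤ h) :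
    d * r ^ m ≤ 2 ^ m * h := by
  have hh : 0 ≤ h := le_trans (abs_nonneg _) (hgy 0 (by omega))
  -- separation of points
  have hsep : ∀ a b : ℕ, a < b → b ≤ m → ((b : ℝ) - a) * r ≤ y b - y a := by
    intro a b hab hbm
    induction b with
    | zero => omega
    | succ k ih =>
      rcases Nat.lt_succ_iff_lt_or_eq.mp hab with hc | hc
      · have h1 := ih hc (by omega)
        have h2 := hgap k (by omega)
        have he : ((k + 1 : ℕ) : ℝ) - a = ((k : ℕ) : ℝ) - a + 1 := by push_cast; ring
        rw [he]
        linarith [h1, h2, (by ring : (((k:ℕ):ℝ) - a + 1) * r = ((k:ℕ):ℝ)*r - a*r + r)]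
      · subst hc
        have h2 := hgap a (by omega)
        have he : ((a + 1 : ℕ) : ℝ) - a = 1 := by push_cast; ring
        rw [he]
        linarith
  have hylt : ∀ i j, i < j → j ≤ m → y i < y j := by
    intro i j hij hj
    have := hsep i j hij hj
    have hij' : (1:ℝ) ≤ (j : ℝ) - i := by
      have : (i:ℝ) + 1 ≤ j := by exact_mod_cast hij
      linarith
    nlinarith
  have hyle : ∀ i j, i ≤ j → j ≤ m → y i ≤ y j := by
    intro i j hij hj
    rcases Nat.lt_or_ge i j with hc | hc
    · exact le_of_lt (hylt i j hc hj)
    · have : i = j := by omega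
      subst this; rfl
  set a : ℝ := y 0 with hadef
  set b : ℝ := y m with hbdef
  have hab : a < b := hylt 0 m (by omega) le_rfl
  have hIccJ : Set.Icc a b ⊆ J := hJ.out (hyJ 0 (by omega)) (hyJ m le_rfl)
  have hIooInt : Set.Ioo a b ⊆ interior J :=
    interior_maximal (Set.Ioo_subset_Icc_self.trans hIccJ) isOpen_Ioo
  have hUD : UniqueDiffOn ℝ J := by
    apply uniqueDiffOn_convex (convex_iff_ordConnected.mpr hJ)
    exact ⟨(a + b) / 2, hIooInt ⟨by linarith, by linarith⟩⟩
  -- iterated derivatives within J agree with global iterated derivatives on the interior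
  have hE : ∀ i, ∀ x ∈ interior J, iteratedDerivWithin i g J x = iteratedDeriv i g x := by
    intro i
    induction i with
    | zero => intro x hx; rw [iteratedDerivWithin_zero, iteratedDeriv_zero]
    | succ k ih =>
      intro x hx
      rw [iteratedDerivWithin_succ,
        derivWithin_of_mem_nhds (mem_interior_iff_mem_nhds.mp hx), iteratedDeriv_succ]
      exact Filter.EventuallyEq.deriv_eq
        (Filter.eventuallyEq_of_mem (isOpen_interior.mem_nhds hx) ih)
  have hDA : ∀ i < m, ∀ x ∈ interior J,
      HasDerivAt (iteratedDeriv i g) (iteratedDeriv (i+1) g x) x := by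
    intro i hi x hx
    have h1 : DifferentiableAt ℝ (iteratedDerivWithin i g J) x :=
      ((hdiff i hi) x (interior_subset hx)).differentiableAt (mem_interior_iff_mem_nhds.mp hx)
    have h2 : iteratedDerivWithin i g J =ᶠ[nhds x] iteratedDeriv i g :=
      Filter.eventuallyEq_of_mem (isOpen_interior.mem_nhds hx) (hE i)
    have h3 : DifferentiableAt ℝ (iteratedDeriv i g) x := by
      rcases h2 with _
      exact (Filter.EventuallyEq.differentiableAt_iff h2).mp h1
    rw [iteratedDeriv_succ]
    exact h3.hasDerivAt
  -- injectivity
  have hinj : Set.InjOn y ↑(Finset.range (m+1)) := by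
    intro i hi j hj hij
    simp only [Finset.coe_range, Set.mem_Iio] at hi hj
    by_contra hne
    rcases Nat.lt_or_ge i j with hc | hc
    · exact absurd hij (ne_of_lt (hylt i j hc (by omega)))
    · have : j < i := by omega
      exact absurd hij.symm (ne_of_lt (hylt j i this (by omega)))
  set P : Polynomial ℝ := Lagrange.interpolate (Finset.range (m+1)) y (fun i => g (y i)) with hPdef
  -- zeros of g - P at the nodes
  have hzero : ∀ i ≤ m, g (y i) - Polynomial.eval (y i) P = 0 := by
    intro i hi
    rw [hPdef, Lagrange.eval_interpolate_at_node (fun i => g (y i)) hinj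
      (Finset.mem_range.mpr (by omega))]
    ring
  -- apply iterated Rolle
  obtain ⟨ξ, hξIcc, hξIoo, hξ0⟩ := stmt7_multiRolle m
    (fun k x => iteratedDeriv k g x - Polynomial.eval x (Polynomial.derivative^[k] P)) a b
    (by
      intro _
      have hg : ContinuousOn g J := by
        have hd0 := hdiff 0 (by omega)
        rw [iteratedDerivWithin_zero] at hd0
        exact hd0.continuousOn
      have : ContinuousOn (fun x => iteratedDeriv 0 g x -
          Polynomial.eval x (Polynomial.derivative^[0] P)) (Set.Icc a b) := by
        simp only [iteratedDeriv_zero, Function.iterate_zero_apply]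
        exact (hg.mono hIccJ).sub (P.continuous_aeval).continuousOn
      exact this)
    (by
      intro k hk x hx
      have hxint := hIooInt hx
      have h1 := hDA k hk x hxint
      have h2 : HasDerivAt (fun t => Polynomial.eval t (Polynomial.derivative^[k] P))
          (Polynomial.eval x (Polynomial.derivative^[k+1] P)) x := by
        rw [Function.iterate_succ_apply']
        exact (Polynomial.derivative^[k] P).hasDerivAt x
      exact h1.sub h2)
    y
    (fun i hi => by linarith [hgap i hi])
    (fun i hi => ⟨hyle 0 i (by omega) hi, hyle i m hi le_rfl⟩)
    (fun i hi => by
      simpa only [iteratedDeriv_zero, Function.iterate_zero_apply] using hzero i hi)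
  have hξIoo' := hξIoo (by omega)
  have hξint := hIooInt hξIoo'
  have hξJ : ξ ∈ J := interior_subset hξint
  -- derivative^[m] P is the constant m! * coeff m
  have hdegP : P.natDegree ≤ m := by
    have := Lagrange.degree_interpolate_lt (fun i => g (y i)) hinj
    rw [Finset.card_range] at this
    rcases eq_or_ne P 0 with h0 | h0
    · rw [h0]; simp
    · have := (Polynomial.degree_eq_natDegree h0) ▸ this
      exact_mod_cast Nat.lt_succ_iff.mp (by exact_mod_cast this)
  have hconst : Polynomial.derivative^[m] P =
      Polynomial.C ((m.factorial : ℝ) * P.coeff m) := by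
    have hnd : (Polynomial.derivative^[m] P).natDegree ≤ 0 := by
      calc (Polynomial.derivative^[m] P).natDegree ≤ P.natDegree - m :=
        Polynomial.natDegree_iterate_derivative P m
      _ ≤ 0 := by omega
    rw [Polynomial.eq_C_of_natDegree_le_zero hnd]
    congr 1
    rw [Polynomial.coeff_iterate_derivative, zero_add, Nat.descFactorial_self, nsmul_eq_mul]
  have hval : iteratedDeriv m g ξ = (m.factorial : ℝ) * P.coeff m := by
    have : iteratedDeriv m g ξ - Polynomial.eval ξ (Polynomial.derivative^[m] P) = 0 := hξ0
    rw [hconst, Polynomial.eval_C] at this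
    linarith
  -- coefficient formula
  have hcoeff : P.coeff m = ∑ i ∈ Finset.range (m+1),
      g (y i) * ∏ j ∈ (Finset.range (m+1)).erase i, (y i - y j)⁻¹ := by
    rw [hPdef, Lagrange.interpolate_apply, Polynomial.finset_sum_coeff]
    apply Finset.sum_congr rfl
    intro i hi
    rw [Polynomial.coeff_C_mul]
    congr 1
    have hcard : ((Finset.range (m+1)).erase i).card = m := by
      rw [Finset.card_erase_of_mem hi, Finset.card_range]
      omega
    have hdeg1 : ∀ p ∈ (Finset.range (m+1)).erase i,
        (Lagrange.basisDivisor (y i) (y p)).natDegree ≤ 1 := by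
      intro p _
      rw [Lagrange.basisDivisor]
      calc (Polynomial.C (y i - y p)⁻¹ * (Polynomial.X - Polynomial.C (y p))).natDegree
          ≤ (Polynomial.X - Polynomial.C (y p)).natDegree := Polynomial.natDegree_C_mul_le _ _
        _ ≤ 1 := le_of_eq (Polynomial.natDegree_X_sub_C _)
    have hprod := Polynomial.coeff_prod_of_natDegree_le _ _ _ hdeg1
    rw [hcard, mul_one] at hprod
    show (Lagrange.basis (Finset.range (m+1)) y i).coeff m = _
    rw [Lagrange.basis, hprod]
    apply Finset.prod_congr rfl
    intro j hj
    rw [Lagrange.basisDivisor, Polynomial.coeff_C_mul]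
    simp [Polynomial.coeff_sub, Polynomial.coeff_X_one, Polynomial.coeff_C]
  -- lower bound on d
  have hd1 : d ≤ (m.factorial : ℝ) * |P.coeff m| := by
    have h1 := hlow ξ hξJ
    rw [hE m ξ hξint, hval, abs_mul, abs_of_nonneg (by positivity : (0:ℝ) ≤ (m.factorial : ℝ))]
      at h1
    exact h1
  -- bound coefficient
  have hbound : |P.coeff m| ≤ ∑ i ∈ Finset.range (m+1),
      h * ((i.factorial : ℝ) * ((m - i).factorial : ℝ) * r ^ m)⁻¹ := by
    rw [hcoeff]
    calc |∑ i ∈ Finset.range (m+1),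
        g (y i) * ∏ j ∈ (Finset.range (m+1)).erase i, (y i - y j)⁻¹|
        ≤ ∑ i ∈ Finset.range (m+1),
          |g (y i) * ∏ j ∈ (Finset.range (m+1)).erase i, (y i - y j)⁻¹| :=
           Finset.abs_sum_le_sum_abs _ _
      _ ≤ ∑ i ∈ Finset.range (m+1),
          h * ((i.factorial : ℝ) * ((m - i).factorial : ℝ) * r ^ m)⁻¹ := by
          apply Finset.sum_le_sum
          intro i hi
          have him : i ≤ m := by have := Finset.mem_range.mp hi; omega
          rw [abs_mul]
          have hprodbd := stmt7_prod_gap y r hr m i him hsep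
          have hfacpos : (0:ℝ) < (i.factorial : ℝ) * ((m - i).factorial : ℝ) * r ^ m := by
            positivity
          have habs : |∏ j ∈ (Finset.range (m+1)).erase i, (y i - y j)⁻¹| =
              (∏ j ∈ (Finset.range (m+1)).erase i, |y i - y j|)⁻¹ := by
            rw [Finset.abs_prod, ← Finset.prod_inv_distrib]
            apply Finset.prod_congr rfl
            intro j _
            rw [abs_inv]
          rw [habs]
          apply mul_le_mul (hgy i him)
          · exact inv_anti₀ hfacpos hprodbd
          · positivity
          · exact hh
  -- combine
  have hfinal : (m.factorial : ℝ) * (∑ i ∈ Finset.range (m+1),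
      h * ((i.factorial : ℝ) * ((m - i).factorial : ℝ) * r ^ m)⁻¹) * r ^ m = 2 ^ m * h := by
    rw [Finset.mul_sum, Finset.sum_mul]
    have : ∀ i ∈ Finset.range (m+1),
        (m.factorial : ℝ) * (h * ((i.factorial : ℝ) * ((m - i).factorial : ℝ) * r ^ m)⁻¹) * r ^ m
        = h * (m.choose i : ℝ) := by
      intro i hi
      have him : i ≤ m := by have := Finset.mem_range.mp hi; omega
      have hchoose : ((m.choose i : ℕ) : ℝ) * (i.factorial : ℝ) * ((m - i).factorial : ℝ)
          = (m.factorial : ℝ) := by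
        exact_mod_cast congrArg (Nat.cast (R := ℝ))
          (Nat.choose_mul_factorial_mul_factorial him)
      have h1 : (i.factorial : ℝ) ≠ 0 := by positivity
      have h2 : ((m - i).factorial : ℝ) ≠ 0 := by positivity
      have h3 : r ^ m ≠ 0 := by positivity
      rw [← hchoose]
      field_simp
    rw [Finset.sum_congr rfl this, ← Finset.mul_sum]
    have : (∑ i ∈ Finset.range (m+1), (m.choose i : ℝ)) = 2 ^ m := by
      rw [← Nat.cast_sum]
      rw [Nat.sum_range_choose]
      push_cast
      ring
    rw [this]
    ring
  calc d * r ^ m ≤ (m.factorial : ℝ) * |P.coeff m| * r ^ m := by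
        apply mul_le_mul_of_nonneg_right hd1 (by positivity)
    _ ≤ (m.factorial : ℝ) * (∑ i ∈ Finset.range (m+1),
        h * ((i.factorial : ℝ) * ((m - i).factorial : ℝ) * r ^ m)⁻¹) * r ^ m := by
        apply mul_le_mul_of_nonneg_right _ (by positivity)
        exact mul_le_mul_of_nonneg_left hbound (by positivity)
    _ = 2 ^ m * h := hfinal

end Analytic

theorem stmt7 (J : Set ℝ) (hJ : J.OrdConnected) (g : ℝ → ℝ) (m : ℕ) (hm : 1 ≤ m)
    (d : ℝ) (hd : 0 < d)
    (hdiff : ∀ i < m, DifferentiableOn ℝ (iteratedDerivWithin i g J) J)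
    (hlow : ∀ τ ∈ J, d ≤ |iteratedDerivWithin m g J τ|)
    (h : ℝ) (hh : 0 < h) :
    volume {τ ∈ J | |g τ| < h} ≤
      ENNReal.ofReal ((2 * ((∑ i ∈ Finset.Icc 2 m, (i : ℝ)) + d⁻¹)) * h ^ (1 / (m : ℝ))) := by
  set E := {τ ∈ J | |g τ| < h} with hEdef
  have hmR : (0:ℝ) < (m:ℝ) := by exact_mod_cast hm
  have hmne : ((m:ℝ)) ≠ 0 := ne_of_gt hmR
  have hhd : 0 < h / d := div_pos hh hd
  set r₀ : ℝ := 2 * (h / d) ^ (1 / (m : ℝ)) with hr₀def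
  have hr₀pos : 0 < r₀ := by
    rw [hr₀def]
    positivity
  have hr₀pow : r₀ ^ m = 2 ^ m * (h / d) := by
    rw [hr₀def, mul_pow]
    congr 1
    rw [← Real.rpow_natCast ((h / d) ^ (1 / (m : ℝ))) m, ← Real.rpow_mul (le_of_lt hhd),
      one_div, inv_mul_cancel₀ hmne, Real.rpow_one]
  have key : ∀ r : ℝ, r₀ < r → volume E ≤ ENNReal.ofReal ((m:ℝ) * r) := by
    intro r hrgt
    by_contra hlt
    push_neg at hlt
    have hrpos : 0 < r := lt_trans hr₀pos hrgt
    obtain ⟨y, hyE, hygap⟩ := stmt7_select E m r hrpos hlt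
    have hA := stmt7_lemA J hJ g m hm d hdiff hlow h r hrpos y
      (fun i hi => (hyE i hi).1) hygap (fun i hi => le_of_lt (hyE i hi).2)
    have hlt2 : d * r₀ ^ m < d * r ^ m := by
      apply mul_lt_mul_of_pos_left _ hd
      exact pow_lt_pow_left₀ hrgt (le_of_lt hr₀pos) (by omega)
    rw [hr₀pow] at hlt2
    have : d * (2 ^ m * (h / d)) = 2 ^ m * h := by
      field_simp
    rw [this] at hlt2
    linarith
  have h1 : volume E ≤ ENNReal.ofReal ((m:ℝ) * r₀) := by
    by_contra hlt
    push_neg at hlt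
    rcases eq_top_or_lt_top (volume E) with htop | hfin
    · have := key (r₀ + 1) (by linarith)
      rw [htop] at this
      exact absurd this (not_le.mpr ENNReal.ofReal_lt_top)
    · set V : ℝ := (volume E).toReal with hVdef
      have hV : (m:ℝ) * r₀ < V := by
        rw [hVdef]
        exact (ENNReal.ofReal_lt_iff_lt_toReal (by positivity) (ne_of_lt hfin)).mp hlt
      set r : ℝ := (r₀ + V / m) / 2 with hrdef
      have hr1 : r₀ < r := by
        rw [hrdef]
        have : r₀ < V / m := by
          rw [lt_div_iff₀ hmR]
          linarith [hV, mul_comm (m:ℝ) r₀]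
        linarith
      have hr2 : (m:ℝ) * r < V := by
        have hmr' : (m:ℝ) * r = ((m:ℝ) * r₀ + V) / 2 := by
          rw [hrdef]
          field_simp
        rw [hmr']
        linarith
      have := key r hr1
      have hVle : ENNReal.ofReal V ≤ volume E := by
        rw [hVdef, ENNReal.ofReal_toReal (ne_of_lt hfin)]
      have : volume E < volume E := by
        calc volume E ≤ ENNReal.ofReal ((m:ℝ) * r) := this
          _ < ENNReal.ofReal V := by
              apply ENNReal.ofReal_lt_ofReal_iff_of_nonneg (by positivity) |>.mpr hr2
          _ ≤ volume E := hVle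
      exact absurd this (lt_irrefl _)
  refine le_trans h1 (ENNReal.ofReal_le_ofReal ?_)
  -- real inequality: m * r₀ ≤ 2 * (Σ + d⁻¹) * h^(1/m)
  set u : ℝ := (d⁻¹) ^ (1 / (m : ℝ)) with hudef
  have hdinv : (0:ℝ) < d⁻¹ := by positivity
  have hupos : 0 < u := by rw [hudef]; positivity
  have hupow : u ^ m = d⁻¹ := by
    rw [hudef, ← Real.rpow_natCast ((d⁻¹) ^ (1 / (m : ℝ))) m, ← Real.rpow_mul (le_of_lt hdinv),
      one_div, inv_mul_cancel₀ hmne, Real.rpow_one]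
  have hsplit : (h / d) ^ (1 / (m : ℝ)) = h ^ (1 / (m : ℝ)) * u := by
    rw [hudef, div_eq_mul_inv, Real.mul_rpow (le_of_lt hh) (le_of_lt hdinv)]
  have hamgm := stmt7_amgm m u (le_of_lt hupos)
  rw [hupow] at hamgm
  have hsum := stmt7_sum_Icc m hm
  have hkey : (m:ℝ) * u ≤ (∑ i ∈ Finset.Icc 2 m, (i : ℝ)) + d⁻¹ := by
    have hm1 : (1:ℝ) ≤ (m:ℝ) := by exact_mod_cast hm
    nlinarith [sq_nonneg ((m:ℝ) - 1), hamgm, hsum, hm1]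
  have hrpow : 0 ≤ h ^ (1 / (m : ℝ)) := Real.rpow_nonneg (le_of_lt hh) _
  calc (m:ℝ) * r₀ = 2 * ((m:ℝ) * u) * h ^ (1 / (m : ℝ)) := by
        rw [hr₀def, hsplit]; ring
    _ ≤ 2 * ((∑ i ∈ Finset.Icc 2 m, (i : ℝ)) + d⁻¹) * h ^ (1 / (m : ℝ)) := by
        apply mul_le_mul_of_nonneg_right _ hrpow
        linarith
end

section
/- Let u⁽¹⁾,…,u⁽ᴷ⁾ be K linearly independent vectors in ℝ^K with ℓ¹-norm at most 1. Then for every w ∈ ℝ^K there exists an index i ∈ {1,…,K} such that |u⁽ⁱ⁾·w| ≥ ‖w‖_{ℓ¹}·|det(u⁽¹⁾,…,u⁽ᴷ⁾)| / K^{3/2}. -/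
open Matrix Finset

lemma my_amgm {n : ℕ} (μ : Fin n → ℝ) (hμ : ∀ i, 0 ≤ μ i) (hsum : ∑ i, μ i ≤ n) :
    ∏ i, μ i ≤ 1 := by
  rcases Nat.eq_zero_or_pos n with h0 | hn
  · subst h0; simp
  have hn' : (0:ℝ) < n := by exact_mod_cast hn
  have hw : ∑ _i : Fin n, (1 / n : ℝ) = 1 := by
    simp; field_simp
  have h := Real.geom_mean_le_arith_mean_weighted Finset.univ (fun _ => (1/n : ℝ)) μ
      (fun i _ => by positivity) hw (fun i _ => hμ i)
  have h2 : (∏ i, μ i) ^ (1 / n : ℝ) ≤ 1 := by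
    rw [← Real.finset_prod_rpow _ _ (fun i _ => hμ i)]
    calc ∏ i, μ i ^ (1 / n : ℝ) ≤ ∑ i, (1/n : ℝ) * μ i := h
      _ = (1/n) * ∑ i, μ i := by rw [Finset.mul_sum]
      _ ≤ (1/n) * n := by
          apply mul_le_mul_of_nonneg_left hsum (by positivity)
      _ = 1 := by field_simp
  have hp : (0:ℝ) ≤ ∏ i, μ i := Finset.prod_nonneg fun i _ => hμ i
  have : ((∏ i, μ i) ^ (1 / n : ℝ)) ^ (n : ℝ) ≤ 1 := by
    apply Real.rpow_le_one (Real.rpow_nonneg hp _) h2 (le_of_lt hn')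
  rwa [← Real.rpow_mul hp, one_div, inv_mul_cancel₀ (ne_of_gt hn'), Real.rpow_one] at this

lemma my_trace_eq {n : ℕ} {A : Matrix (Fin n) (Fin n) ℝ} (hA : A.IsHermitian) :
    A.trace = ∑ i, hA.eigenvalues i := by
  nth_rewrite 1 [hA.spectral_theorem]
  rw [Unitary.conjStarAlgAut_apply]
  rw [Matrix.trace_mul_cycle]
  rw [show (star (hA.eigenvectorUnitary : Matrix (Fin n) (Fin n) ℝ)) *
      (hA.eigenvectorUnitary : Matrix (Fin n) (Fin n) ℝ) = 1 from
    Matrix.mem_unitaryGroup_iff'.mp hA.eigenvectorUnitary.2, one_mul, Matrix.trace_diagonal]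
  simp

lemma my_hadamard {n : ℕ} (A : Matrix (Fin n) (Fin n) ℝ)
    (h : ∀ i, ∑ j, A i j ^ 2 ≤ 1) : |A.det| ≤ 1 := by
  have hG : (A * Aᴴ).PosSemidef := Matrix.posSemidef_self_mul_conjTranspose A
  have hH := hG.isHermitian
  have hdet : (A * Aᴴ).det = ∏ i, hH.eigenvalues i := by
    rw [hH.det_eq_prod_eigenvalues]; norm_num
  have htr : (A * Aᴴ).trace = ∑ i, ∑ j, A i j ^ 2 := by
    rw [Matrix.trace]
    congr 1; ext i
    simp [Matrix.mul_apply, Matrix.diag, Matrix.conjTranspose_apply, sq]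
  have h1 : ∑ i, hH.eigenvalues i ≤ n := by
    rw [← my_trace_eq hH, htr]
    calc ∑ i, ∑ j, A i j ^ 2 ≤ ∑ _i : Fin n, (1:ℝ) := Finset.sum_le_sum (fun i _ => h i)
      _ = n := by simp
  have h2 : ∏ i, hH.eigenvalues i ≤ 1 := my_amgm _ (fun i => hG.eigenvalues_nonneg i) h1
  have h3 : A.det ^ 2 ≤ 1 := by
    have : (A * Aᴴ).det = A.det ^ 2 := by
      rw [Matrix.det_mul, Matrix.det_conjTranspose, sq]; simp
    rw [← this, hdet]; exact h2
  nlinarith [abs_nonneg A.det, sq_abs A.det]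

lemma my_det_updateRow {n : ℕ} (A : Matrix (Fin n) (Fin n) ℝ) (j : Fin n) (c : Fin n → ℝ) :
    (A.updateRow j c).det = ∑ i, Matrix.adjugate A i j * c i := by
  rw [← Matrix.cramer_transpose_apply, Matrix.cramer_eq_adjugate_mulVec,
    Matrix.mulVec, dotProduct]
  congr 1; ext i
  rw [← Matrix.adjugate_transpose]
  rfl

lemma my_adj_col {n : ℕ} (A : Matrix (Fin n) (Fin n) ℝ)
    (h : ∀ i, ∑ j, A i j ^ 2 ≤ 1) (j : Fin n) :
    ∑ i, (Matrix.adjugate A i j) ^ 2 ≤ 1 := by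
  have main : ∀ c : Fin n → ℝ, c = (fun i => Matrix.adjugate A i j) →
      ∑ i, c i ^ 2 ≤ 1 := by
    intro c hc
    set s : ℝ := Real.sqrt (∑ i, c i ^ 2) with hs
    have hs0 : 0 ≤ s := Real.sqrt_nonneg _
    have hss : s ^ 2 = ∑ i, c i ^ 2 := Real.sq_sqrt (by positivity)
    rcases eq_or_lt_of_le hs0 with h0 | hpos
    · rw [← hss, ← h0]; norm_num
    have key : (A.updateRow j (s⁻¹ • c)).det = s⁻¹ * (∑ i, c i ^ 2) := by
      rw [Matrix.det_updateRow_smul, my_det_updateRow]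
      congr 1
      apply Finset.sum_congr rfl
      intro i _
      rw [hc, sq]
    have hrows : ∀ i, ∑ k, (A.updateRow j (s⁻¹ • c)) i k ^ 2 ≤ 1 := by
      intro i
      by_cases hij : i = j
      · subst hij
        simp only [Matrix.updateRow_self, Pi.smul_apply, smul_eq_mul]
        have h1 : ∑ k, (s⁻¹ * c k) ^ 2 = s⁻¹ ^ 2 * ∑ k, c k ^ 2 := by
          rw [Finset.mul_sum]; apply Finset.sum_congr rfl; intro k _; ring
        rw [h1, ← hss]
        rw [show s⁻¹ ^ 2 * s ^ 2 = 1 by field_simp]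
      · simp only [Matrix.updateRow_ne hij]
        exact h i
    have hH := my_hadamard _ hrows
    rw [key] at hH
    have h2 : s⁻¹ * (∑ i, c i ^ 2) ≤ 1 := le_trans (le_abs_self _) hH
    have hsle : s ≤ 1 := by
      rw [← hss] at h2
      calc s = s⁻¹ * s ^ 2 := by field_simp [sq]
        _ ≤ 1 := h2
    rw [← hss]
    nlinarith
  exact main _ rfl

theorem stmt8 (K : ℕ) (hK : 1 ≤ K) (u : Fin K → (Fin K → ℝ))
    (hind : LinearIndependent ℝ u) (hnorm : ∀ i, ∑ j, |u i j| ≤ 1) (w : Fin K → ℝ) :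
    ∃ i : Fin K,
      (∑ j, |w j|) * |Matrix.det (Matrix.transpose (Matrix.of u))| / (K : ℝ) ^ (3 / 2 : ℝ) ≤
        |∑ j, u i j * w j| := by
  classical
  set A : Matrix (Fin K) (Fin K) ℝ := Matrix.of u with hA
  have hrow : ∀ i, ∑ j, A i j ^ 2 ≤ 1 := by
    intro i
    calc ∑ j, A i j ^ 2 ≤ ∑ j, |u i j| * 1 := by
          apply Finset.sum_le_sum; intro j _
          have h1 : |u i j| ≤ 1 :=
            le_trans (Finset.single_le_sum (f := fun j => |u i j|)
              (fun k _ => abs_nonneg _) (Finset.mem_univ j)) (hnorm i)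
          calc A i j ^ 2 = |u i j| * |u i j| := by
                rw [abs_mul_abs_self, sq]; simp [hA]
            _ ≤ |u i j| * 1 := mul_le_mul_of_nonneg_left h1 (abs_nonneg _)
      _ = ∑ j, |u i j| := by simp
      _ ≤ 1 := hnorm i
  have hcol1 : ∀ j : Fin K, ∑ i, |Matrix.adjugate A i j| ≤ Real.sqrt K := by
    intro j
    have h2 : (∑ i, |Matrix.adjugate A i j|) ^ 2 ≤ K * ∑ i, (Matrix.adjugate A i j) ^ 2 := by
      have := sq_sum_le_card_mul_sum_sq
        (s := (Finset.univ : Finset (Fin K))) (f := fun i => |Matrix.adjugate A i j|)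
      simpa [sq_abs] using this
    have h3 : (∑ i, |Matrix.adjugate A i j|) ^ 2 ≤ K := by
      have hadj := my_adj_col A hrow j
      have hKc : (0:ℝ) ≤ (K:ℝ) := Nat.cast_nonneg K
      calc (∑ i, |Matrix.adjugate A i j|) ^ 2
          ≤ (K:ℝ) * ∑ i, (Matrix.adjugate A i j) ^ 2 := h2
        _ ≤ (K:ℝ) * 1 := mul_le_mul_of_nonneg_left hadj hKc
        _ = (K:ℝ) := mul_one _
    have h4 : (0:ℝ) ≤ ∑ i, |Matrix.adjugate A i j| :=
      Finset.sum_nonneg fun i _ => abs_nonneg _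
    calc ∑ i, |Matrix.adjugate A i j|
        = Real.sqrt ((∑ i, |Matrix.adjugate A i j|) ^ 2) := (Real.sqrt_sq h4).symm
      _ ≤ Real.sqrt K := Real.sqrt_le_sqrt h3
  -- choose maximizing index
  obtain ⟨i₀, -, hmax⟩ := Finset.exists_max_image (Finset.univ : Finset (Fin K))
    (fun i => |∑ j, u i j * w j|) ⟨⟨0, hK⟩, Finset.mem_univ _⟩
  refine ⟨i₀, ?_⟩
  set M : ℝ := |∑ j, u i₀ j * w j| with hM
  have hM0 : 0 ≤ M := abs_nonneg _
  -- key identity : det A * w j = ∑ i, adjugate A j i * (A *ᵥ w) i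
  have hkey : ∀ j, A.det * w j = ∑ i, Matrix.adjugate A j i * (∑ k, u i k * w k) := by
    intro j
    have h5 : (Matrix.adjugate A * A) *ᵥ w = A.det • w := by
      rw [Matrix.adjugate_mul]; simp [Matrix.smul_mulVec]
    have h6 := congrFun h5 j
    rw [← Matrix.mulVec_mulVec] at h6
    simpa [Matrix.mulVec, dotProduct, hA, mul_comm] using h6.symm
  have hbound : ∀ j, |A.det| * |w j| ≤ ∑ i, |Matrix.adjugate A j i| * M := by
    intro j
    rw [← abs_mul, hkey j]
    calc |∑ i, Matrix.adjugate A j i * (∑ k, u i k * w k)|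
        ≤ ∑ i, |Matrix.adjugate A j i * (∑ k, u i k * w k)| := Finset.abs_sum_le_sum_abs _ _
      _ ≤ ∑ i, |Matrix.adjugate A j i| * M := by
          apply Finset.sum_le_sum; intro i _
          rw [abs_mul]
          exact mul_le_mul_of_nonneg_left (hmax i (Finset.mem_univ i)) (abs_nonneg _)
  have hmain : (∑ j, |w j|) * |A.det| ≤ (K : ℝ) * Real.sqrt K * M := by
    calc (∑ j, |w j|) * |A.det| = ∑ j, |A.det| * |w j| := by
          rw [Finset.sum_mul]
          exact Finset.sum_congr rfl fun j _ => mul_comm _ _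
      _ ≤ ∑ j, ∑ i, |Matrix.adjugate A j i| * M :=
          Finset.sum_le_sum fun j _ => hbound j
      _ = (∑ j, ∑ i, |Matrix.adjugate A j i|) * M := by
          rw [Finset.sum_mul]; apply Finset.sum_congr rfl; intro j _
          rw [Finset.sum_mul]
      _ = (∑ i, ∑ j, |Matrix.adjugate A j i|) * M := by rw [Finset.sum_comm]
      _ ≤ (∑ _i : Fin K, Real.sqrt K) * M := by
          apply mul_le_mul_of_nonneg_right _ hM0
          exact Finset.sum_le_sum fun i _ => hcol1 i
      _ = (K : ℝ) * Real.sqrt K * M := by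
          simp [Finset.sum_const]
  -- finish
  have hKpos : (0:ℝ) < (K : ℝ) ^ (3 / 2 : ℝ) :=
    Real.rpow_pos_of_pos (by exact_mod_cast lt_of_lt_of_le one_pos hK) _
  rw [div_le_iff₀ hKpos]
  have hdetT : |Matrix.det (Matrix.transpose (Matrix.of u))| = |A.det| := by
    rw [Matrix.det_transpose]
  have hrpow : (K : ℝ) ^ (3 / 2 : ℝ) = (K : ℝ) * Real.sqrt K := by
    have hKp : (0:ℝ) < K := by exact_mod_cast lt_of_lt_of_le one_pos hK
    rw [show (3/2 : ℝ) = 1 + 1/2 by norm_num, Real.rpow_add hKp, Real.rpow_one,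
      Real.sqrt_eq_rpow]
  rw [hdetT, hrpow]
  calc (∑ j, |w j|) * |A.det| ≤ (K:ℝ) * Real.sqrt K * M := hmain
    _ = M * ((K:ℝ) * Real.sqrt K) := by ring
end
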